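/- Let n ≥ 1 and π/3 ≤ θ ≤ π. Then every unit-ball packing in ℝ^n has upper density at most sin^n(θ/2) · A(n,θ). -/

import Mathlib

open MeasureTheory Metric Real
open scoped BigOperators ENNReal

/-- `A(n,θ)`: the maximum size of a spherical code in the unit sphere of `ℝ^n`
with minimal angle `θ`, i.e. a finite set of unit vectors whose pairwise inner
products are at most `cos θ`. -/
noncomputable def sphericalCodeMax (n : ℕ) (θ : ℝ) : ℕ :=
  sSup {N : ℕ | ∃ C : Finset (EuclideanSpace ℝ (Fin n)), C.card = N ∧
    (∀ x ∈ C, ‖x‖ = 1) ∧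
    (∀ x ∈ C, ∀ y ∈ C, x ≠ y → (inner ℝ x y : ℝ) ≤ Real.cos θ)}

/-- The upper density of the packing of unit balls centered at the points of `P`. -/
noncomputable def packingUpperDensity (n : ℕ) (P : Set (EuclideanSpace ℝ (Fin n))) : ℝ≥0∞ :=
  Filter.limsup (fun R : ℝ =>
    volume ((⋃ x ∈ P, closedBall x 1) ∩ closedBall (0 : EuclideanSpace ℝ (Fin n)) R) /
      volume (closedBall (0 : EuclideanSpace ℝ (Fin n)) R)) Filter.atTop

/- ### Auxiliary lemmas -/

lemma poly_core (M a b c : ℝ) (hM1 : 1 ≤ M) (hM2 : M ≤ 2) (ha : 0 < a) (hb : 0 < b)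
    (haM : a ≤ M) (hbM : b ≤ M) (hc : 2 ≤ c) :
    M^2*a^2 + M^2*b^2 - M^2*c^2 ≤ 2*a*b*(M^2 - 2) := by
  have hc4 : 4 ≤ c^2 := by nlinarith
  have hM2sq : (0:ℝ) ≤ M^2 := sq_nonneg M
  have haM2 : (0:ℝ) ≤ a * (M - a) * M^2 :=
    mul_nonneg (mul_nonneg ha.le (sub_nonneg.2 haM)) hM2sq
  have hbM2 : (0:ℝ) ≤ b * (M - b) * M^2 :=
    mul_nonneg (mul_nonneg hb.le (sub_nonneg.2 hbM)) hM2sq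
  rcases le_or_gt 0 (M^3 + (4 - 2*M^2)*b) with hcs | hcs
  · nlinarith [mul_nonneg (sub_nonneg.2 haM) hcs,
      mul_nonneg (mul_nonneg (by nlinarith : (0:ℝ) ≤ 4 - M^2) (by linarith : (0:ℝ) ≤ M))
        (sub_nonneg.2 hbM), haM2, hbM2]
  · nlinarith [mul_nonneg ha.le (le_of_lt (neg_pos.2 hcs)), haM2,
      mul_nonneg (mul_nonneg (by linarith : (0:ℝ) ≤ 2-b) (by linarith : (0:ℝ) ≤ 2+b)) hM2sq]

lemma sin_half_facts {θ : ℝ} (hθ1 : π/3 ≤ θ) (hθ2 : θ ≤ π) :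
    1/2 ≤ Real.sin (θ/2) ∧ Real.sin (θ/2) ≤ 1 ∧ Real.cos θ = 1 - 2 * Real.sin (θ/2)^2 := by
  have hpi := Real.pi_pos
  have h1 : Real.sin (π/6) ≤ Real.sin (θ/2) := by
    apply Real.sin_le_sin_of_le_of_le_pi_div_two (by linarith) (by linarith) (by linarith)
  rw [Real.sin_pi_div_six] at h1
  refine ⟨h1, Real.sin_le_one _, ?_⟩
  have h := Real.cos_two_mul (θ/2)
  have h2 := Real.sin_sq_add_cos_sq (θ/2)
  have e : 2 * (θ/2) = θ := by ring
  rw [e] at h; nlinarith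

lemma cos_le_half {θ : ℝ} (hθ1 : π/3 ≤ θ) (hθ2 : θ ≤ π) : Real.cos θ ≤ 1/2 := by
  have hpi := Real.pi_pos
  have := Real.cos_le_cos_of_nonneg_of_le_pi (by positivity : (0:ℝ) ≤ π/3) hθ2 hθ1
  rwa [Real.cos_pi_div_three] at this

lemma code_inner {n : ℕ} {θ : ℝ} (hθ1 : π/3 ≤ θ) (hθ2 : θ ≤ π)
    (z x y : EuclideanSpace ℝ (Fin n)) (hx : x ≠ z) (hy : y ≠ z)
    (hxz : dist x z ≤ 1 / Real.sin (θ/2)) (hyz : dist y z ≤ 1 / Real.sin (θ/2))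
    (hxy : 2 ≤ dist x y) :
    (inner ℝ (‖x - z‖⁻¹ • (x - z)) (‖y - z‖⁻¹ • (y - z)) : ℝ) ≤ Real.cos θ := by
  obtain ⟨hs1, hs2, hcos⟩ := sin_half_facts hθ1 hθ2
  set s := Real.sin (θ/2) with hs
  have hspos : 0 < s := by linarith
  set M := 1/s with hM
  have hM1 : 1 ≤ M := by rw [hM, le_div_iff₀ hspos]; linarith
  have hM2 : M ≤ 2 := by rw [hM, div_le_iff₀ hspos]; linarith
  set a := ‖x - z‖ with hadef
  set b := ‖y - z‖ with hbdef
  set c := ‖x - y‖ with hcdef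
  have ha : 0 < a := by rw [hadef, norm_pos_iff]; exact sub_ne_zero.2 hx
  have hb : 0 < b := by rw [hbdef, norm_pos_iff]; exact sub_ne_zero.2 hy
  have haM : a ≤ M := by rw [hadef, ← dist_eq_norm]; exact hxz
  have hbM : b ≤ M := by rw [hbdef, ← dist_eq_norm]; exact hyz
  have hc : 2 ≤ c := by rw [hcdef, ← dist_eq_norm]; exact hxy
  have hinner : (inner ℝ (x - z) (y - z) : ℝ) = (a^2 + b^2 - c^2)/2 := by
    have hnorm := norm_sub_sq_real (x - z) (y - z)
    have e : (x - z) - (y - z) = x - y := by abel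
    rw [e] at hnorm
    rw [← hadef, ← hbdef, ← hcdef] at hnorm
    linarith
  rw [real_inner_smul_left, real_inner_smul_right, hinner]
  have key := poly_core M a b c hM1 hM2 ha hb haM hbM hc
  have hcos2 : Real.cos θ = (M^2 - 2)/M^2 := by
    rw [hcos, hM]; field_simp
  rw [hcos2]
  have e2 : a⁻¹ * (b⁻¹ * ((a^2 + b^2 - c^2)/2)) = (a^2 + b^2 - c^2)/(2*a*b) := by
    rw [eq_div_iff (by positivity)]
    field_simp
  rw [e2, div_le_div_iff₀ (by positivity) (by positivity)]
  nlinarith [key]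

lemma card_le_ratio {n : ℕ} (hn : 1 ≤ n) (F : Finset (EuclideanSpace ℝ (Fin n))) {δ R : ℝ}
    (hδ : 0 < δ) (hR : 0 ≤ R)
    (hsep : ∀ x ∈ F, ∀ y ∈ F, x ≠ y → δ ≤ dist x y)
    (hmem : ∀ x ∈ F, ‖x‖ ≤ R) :
    (F.card : ℝ) ≤ ((R + δ/2)/(δ/2))^n := by
  haveI : Nontrivial (EuclideanSpace ℝ (Fin n)) := by
    have h0 : 0 < Module.finrank ℝ (EuclideanSpace ℝ (Fin n)) := by
      rw [finrank_euclideanSpace_fin]; omega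
    exact Module.nontrivial_of_finrank_pos h0
  set ρ := δ/2 with hρ
  have hρpos : 0 < ρ := by positivity
  have hdisj : (F : Set (EuclideanSpace ℝ (Fin n))).PairwiseDisjoint (fun x => ball x ρ) := by
    intro x hx y hy hxy
    exact ball_disjoint_ball (by
      have := hsep x hx y hy hxy
      rw [hρ]; linarith)
  have hsum : ∑ x ∈ F, volume (ball x ρ) = volume (⋃ x ∈ F, ball x ρ) :=
    (measure_biUnion_finset hdisj (fun _ _ => measurableSet_ball)).symm
  have hsub : (⋃ x ∈ F, ball x ρ) ⊆ ball (0 : EuclideanSpace ℝ (Fin n)) (R + ρ) := by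
    intro p hp
    simp only [Set.mem_iUnion] at hp
    obtain ⟨x, hx, hpx⟩ := hp
    rw [mem_ball] at hpx ⊢
    calc dist p 0 ≤ dist p x + dist x 0 := dist_triangle _ _ _
      _ < ρ + R := by
          have : dist x 0 ≤ R := by rw [dist_zero_right]; exact hmem x hx
          linarith [hpx]
      _ = R + ρ := by ring
  have hconst : ∀ x ∈ F, volume (ball x ρ) = volume (ball (0 : EuclideanSpace ℝ (Fin n)) ρ) := fun x _ =>
    Measure.addHaar_ball_center volume x ρ
  have htot : (F.card : ℝ≥0∞) * volume (ball (0 : EuclideanSpace ℝ (Fin n)) ρ) ≤ volume (ball (0 : EuclideanSpace ℝ (Fin n)) (R + ρ)) := by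
    calc (F.card : ℝ≥0∞) * volume (ball (0 : EuclideanSpace ℝ (Fin n)) ρ)
        = ∑ x ∈ F, volume (ball x ρ) := by
          rw [Finset.sum_congr rfl hconst, Finset.sum_const, nsmul_eq_mul]
      _ = volume (⋃ x ∈ F, ball x ρ) := hsum
      _ ≤ volume (ball (0 : EuclideanSpace ℝ (Fin n)) (R + ρ)) := measure_mono hsub
  have hfr : Module.finrank ℝ (EuclideanSpace ℝ (Fin n)) = n := finrank_euclideanSpace_fin
  have e1 : volume (ball (0 : EuclideanSpace ℝ (Fin n)) ρ) =
      ENNReal.ofReal (ρ^n) * volume (ball (0 : EuclideanSpace ℝ (Fin n)) 1) := by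
    rw [Measure.addHaar_ball volume _ hρpos.le, hfr]
  have e2 : volume (ball (0 : EuclideanSpace ℝ (Fin n)) (R + ρ)) =
      ENNReal.ofReal ((R + ρ)^n) * volume (ball (0 : EuclideanSpace ℝ (Fin n)) 1) := by
    rw [Measure.addHaar_ball volume _ (by positivity : (0:ℝ) ≤ R + ρ), hfr]
  rw [e1, e2] at htot
  have hu0 : volume (ball (0 : EuclideanSpace ℝ (Fin n)) 1) ≠ 0 := (measure_ball_pos volume _ one_pos).ne'
  have hut : volume (ball (0 : EuclideanSpace ℝ (Fin n)) 1) ≠ ⊤ := measure_ball_lt_top.ne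
  rw [← mul_assoc, ENNReal.mul_le_mul_iff_left hu0 hut] at htot
  have hcast : (F.card : ℝ≥0∞) = ENNReal.ofReal (F.card : ℝ) := by
    simp [ENNReal.ofReal_natCast]
  rw [hcast, ← ENNReal.ofReal_mul (by positivity)] at htot
  rw [ENNReal.ofReal_le_ofReal_iff (by positivity)] at htot
  rw [div_pow, le_div_iff₀ (by positivity)]
  exact htot

lemma bddAbove_code {n : ℕ} (hn : 1 ≤ n) {θ : ℝ} (hθ1 : π/3 ≤ θ) (hθ2 : θ ≤ π) :
    BddAbove {N : ℕ | ∃ C : Finset (EuclideanSpace ℝ (Fin n)), C.card = N ∧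
      (∀ x ∈ C, ‖x‖ = 1) ∧
      (∀ x ∈ C, ∀ y ∈ C, x ≠ y → (inner ℝ x y : ℝ) ≤ Real.cos θ)} := by
  refine ⟨3^n, fun N hN => ?_⟩
  obtain ⟨C, hcard, hunit, hcode⟩ := hN
  have hsep : ∀ x ∈ C, ∀ y ∈ C, x ≠ y → (1:ℝ) ≤ dist x y := by
    intro x hx y hy hxy
    have h1 := hcode x hx y hy hxy
    have h2 : Real.cos θ ≤ 1/2 := cos_le_half hθ1 hθ2
    have h3 := norm_sub_sq_real x y
    rw [hunit x hx, hunit y hy] at h3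
    have h4 : 1 ≤ ‖x - y‖^2 := by nlinarith
    rw [dist_eq_norm]
    nlinarith [norm_nonneg (x - y)]
  have hmem : ∀ x ∈ C, ‖x‖ ≤ (1:ℝ) := fun x hx => (hunit x hx).le
  have := card_le_ratio hn C one_pos zero_le_one hsep hmem
  have h5 : ((1:ℝ) + 1/2)/(1/2) = 3 := by norm_num
  rw [h5] at this
  rw [hcard] at this
  have : (N : ℝ) ≤ ((3^n : ℕ) : ℝ) := by push_cast; exact this
  exact_mod_cast this

lemma finite_inter {n : ℕ} (hn : 1 ≤ n) (P : Set (EuclideanSpace ℝ (Fin n)))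
    (hP : ∀ x ∈ P, ∀ y ∈ P, x ≠ y → 2 ≤ dist x y) (t : ℝ) :
    (P ∩ closedBall (0 : EuclideanSpace ℝ (Fin n)) t).Finite := by
  by_contra h
  have hinf : (P ∩ closedBall (0 : EuclideanSpace ℝ (Fin n)) t).Infinite := h
  set K := ⌈((max t 0 + 1) : ℝ)^n⌉₊ + 1 with hK
  obtain ⟨S, hSsub, hSfin, hScard⟩ := hinf.exists_subset_ncard_eq K
  set F := hSfin.toFinset with hF
  have hFcard : F.card = K := by
    rw [hF]; rw [← Set.ncard_coe_finset]; simp [hScard]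
  have hFsub : ∀ x ∈ F, x ∈ P ∩ closedBall (0 : EuclideanSpace ℝ (Fin n)) t := by
    intro x hx
    rw [hF, Set.Finite.mem_toFinset] at hx
    exact hSsub hx
  have hsep : ∀ x ∈ F, ∀ y ∈ F, x ≠ y → (2:ℝ) ≤ dist x y := fun x hx y hy hxy =>
    hP x (hFsub x hx).1 y (hFsub y hy).1 hxy
  have hmem : ∀ x ∈ F, ‖x‖ ≤ max t 0 := by
    intro x hx
    have := (hFsub x hx).2
    rw [mem_closedBall, dist_zero_right] at this
    exact this.trans (le_max_left _ _)
  have hb := card_le_ratio hn F two_pos (le_max_right t 0) hsep hmem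
  have he : ((max t 0 + 2/2)/(2/2) : ℝ) = max t 0 + 1 := by norm_num
  rw [he, hFcard] at hb
  have h2 : ((max t 0 + 1) : ℝ)^n ≤ (K - 1 : ℕ) := by
    rw [hK]; simp only [Nat.add_sub_cancel]
    exact Nat.le_ceil _
  have h3 : (K : ℝ) ≤ (K - 1 : ℕ) := hb.trans h2
  have h4 : ((K - 1 : ℕ) : ℝ) < (K : ℝ) := by
    have : K - 1 < K := by omega
    exact_mod_cast this
  linarith

lemma volume_P_zero {n : ℕ} (hn : 1 ≤ n) (P : Set (EuclideanSpace ℝ (Fin n)))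
    (hP : ∀ x ∈ P, ∀ y ∈ P, x ≠ y → 2 ≤ dist x y) : volume P = 0 := by
  haveI : Nontrivial (EuclideanSpace ℝ (Fin n)) := by
    have h0 : 0 < Module.finrank ℝ (EuclideanSpace ℝ (Fin n)) := by
      rw [finrank_euclideanSpace_fin]; omega
    exact Module.nontrivial_of_finrank_pos h0
  have hcov : P = ⋃ m : ℕ, P ∩ closedBall (0 : EuclideanSpace ℝ (Fin n)) m := by
    ext x
    simp only [Set.mem_iUnion, Set.mem_inter_iff, mem_closedBall, dist_zero_right]
    constructor
    · intro hx
      exact ⟨⌈‖x‖⌉₊, hx, Nat.le_ceil _⟩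
    · rintro ⟨m, hx, -⟩; exact hx
  have hcnt : P.Countable := by
    rw [hcov]
    exact Set.countable_iUnion (fun m => (finite_inter hn P hP m).countable)
  exact hcnt.measure_zero _

/-- Main counting estimate. -/
lemma counting {n : ℕ} (hn : 1 ≤ n) {θ : ℝ} (hθ1 : π/3 ≤ θ) (hθ2 : θ ≤ π)
    (P : Set (EuclideanSpace ℝ (Fin n)))
    (hP : ∀ x ∈ P, ∀ y ∈ P, x ≠ y → 2 ≤ dist x y)
    (F : Finset (EuclideanSpace ℝ (Fin n))) (hFP : ∀ x ∈ F, x ∈ P)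
    (t : ℝ) (hFt : ∀ x ∈ F, ‖x‖ ≤ t) :
    (F.card : ℝ≥0∞) * volume (closedBall (0 : EuclideanSpace ℝ (Fin n)) (1/Real.sin (θ/2))) ≤
      (sphericalCodeMax n θ : ℝ≥0∞) *
        volume (closedBall (0 : EuclideanSpace ℝ (Fin n)) (t + 1/Real.sin (θ/2))) := by
  classical
  obtain ⟨hs1, hs2, _⟩ := sin_half_facts hθ1 hθ2
  set M := 1/Real.sin (θ/2) with hM
  set A := sphericalCodeMax n θ with hA
  have hPnull : volume P = 0 := volume_P_zero hn P hP
  have hbound : ∀ᵐ z : EuclideanSpace ℝ (Fin n), (∑ x ∈ F, (closedBall x M).indicator (fun _ => (1:ℝ≥0∞)) z) ≤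
      (closedBall (0 : EuclideanSpace ℝ (Fin n)) (t + M)).indicator (fun _ => (A : ℝ≥0∞)) z := by
    filter_upwards [measure_eq_zero_iff_ae_notMem.mp hPnull] with z hz
    by_cases hzb : z ∈ closedBall (0 : EuclideanSpace ℝ (Fin n)) (t + M)
    · rw [Set.indicator_of_mem hzb]
      set G := F.filter (fun x => z ∈ closedBall x M) with hG
      have hsum : (∑ x ∈ F, (closedBall x M).indicator (fun _ => (1:ℝ≥0∞)) z) =
          (G.card : ℝ≥0∞) := by
        rw [hG, Finset.card_filter]
        push_cast
        apply Finset.sum_congr rfl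
        intro x hx
        by_cases hmem : z ∈ closedBall x M
        · rw [Set.indicator_of_mem hmem, if_pos hmem]
        · rw [Set.indicator_of_notMem hmem, if_neg hmem]
      rw [hsum]
      -- the unit vectors based at z form a spherical code
      set u : EuclideanSpace ℝ (Fin n) → EuclideanSpace ℝ (Fin n) := fun x => ‖x - z‖⁻¹ • (x - z) with hu
      have hGmem : ∀ x ∈ G, x ∈ P ∧ dist x z ≤ M := by
        intro x hx
        rw [hG, Finset.mem_filter] at hx
        refine ⟨hFP x hx.1, ?_⟩
        have := hx.2
        rw [mem_closedBall, dist_comm] at this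
        exact this
      have hne : ∀ x ∈ G, x ≠ z := by
        intro x hx h
        apply hz
        rw [← h]
        exact (hGmem x hx).1
      have hunit : ∀ x ∈ G, ‖u x‖ = 1 := by
        intro x hx
        exact norm_smul_inv_norm (sub_ne_zero.2 (hne x hx))
      have hcode : ∀ x ∈ G, ∀ y ∈ G, x ≠ y → (inner ℝ (u x) (u y) : ℝ) ≤ Real.cos θ := by
        intro x hx y hy hxy
        exact code_inner hθ1 hθ2 z x y (hne x hx) (hne y hy)
          (hGmem x hx).2 (hGmem y hy).2
          (hP x (hGmem x hx).1 y (hGmem y hy).1 hxy)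
      have hinj : Set.InjOn u G := by
        intro x hx y hy hxy
        by_contra hne2
        have h1 := hcode x hx y hy hne2
        rw [hxy] at h1
        have h2 : (inner ℝ (u y) (u y) : ℝ) = 1 := by
          rw [real_inner_self_eq_norm_sq, hunit y hy]; norm_num
        have h3 := cos_le_half hθ1 hθ2
        rw [h2] at h1
        linarith
      have hcard : (G.image u).card = G.card := Finset.card_image_of_injOn hinj
      have hmemset : G.card ∈ {N : ℕ | ∃ C : Finset (EuclideanSpace ℝ (Fin n)), C.card = N ∧
          (∀ x ∈ C, ‖x‖ = 1) ∧
          (∀ x ∈ C, ∀ y ∈ C, x ≠ y → (inner ℝ x y : ℝ) ≤ Real.cos θ)} := by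
        refine ⟨G.image u, hcard, ?_, ?_⟩
        · intro a ha
          obtain ⟨x, hx, rfl⟩ := Finset.mem_image.mp ha
          exact hunit x hx
        · intro a ha b hb hab
          obtain ⟨x, hx, rfl⟩ := Finset.mem_image.mp ha
          obtain ⟨y, hy, rfl⟩ := Finset.mem_image.mp hb
          have hxy : x ≠ y := fun h => hab (by rw [h])
          exact hcode x hx y hy hxy
      have hle : G.card ≤ A := le_csSup (bddAbove_code hn hθ1 hθ2) hmemset
      exact_mod_cast Nat.cast_le.mpr hle
    · rw [Set.indicator_of_notMem hzb]
      rw [Finset.sum_eq_zero]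
      intro x hx
      apply Set.indicator_of_notMem
      intro hmem
      apply hzb
      rw [mem_closedBall] at hmem ⊢
      calc dist z 0 ≤ dist z x + dist x 0 := dist_triangle _ _ _
        _ ≤ M + t := by
            have : dist x 0 ≤ t := by rw [dist_zero_right]; exact hFt x hx
            linarith [hmem]
        _ = t + M := by ring
  calc (F.card : ℝ≥0∞) * volume (closedBall (0 : EuclideanSpace ℝ (Fin n)) M)
      = ∑ x ∈ F, volume (closedBall x M) := by
        rw [Finset.sum_congr rfl (fun x _ => Measure.addHaar_closedBall_center volume x M),
          Finset.sum_const, nsmul_eq_mul]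
    _ = ∑ x ∈ F, ∫⁻ z, (closedBall x M).indicator (fun _ => (1:ℝ≥0∞)) z := by
        apply Finset.sum_congr rfl
        intro x _
        rw [lintegral_indicator_const measurableSet_closedBall, one_mul]
    _ = ∫⁻ z, ∑ x ∈ F, (closedBall x M).indicator (fun _ => (1:ℝ≥0∞)) z := by
        rw [lintegral_finset_sum]
        intro x _
        exact measurable_const.indicator measurableSet_closedBall
    _ ≤ ∫⁻ z, (closedBall (0 : EuclideanSpace ℝ (Fin n)) (t + M)).indicator (fun _ => (A : ℝ≥0∞)) z :=
        lintegral_mono_ae hbound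
    _ = (A : ℝ≥0∞) * volume (closedBall (0 : EuclideanSpace ℝ (Fin n)) (t + M)) :=
        lintegral_indicator_const measurableSet_closedBall _

theorem packing_density_le_sin_pow_mul_codeMax
    (n : ℕ) (hn : 1 ≤ n) (θ : ℝ) (hθ1 : π / 3 ≤ θ) (hθ2 : θ ≤ π)
    (P : Set (EuclideanSpace ℝ (Fin n)))
    (hP : ∀ x ∈ P, ∀ y ∈ P, x ≠ y → 2 ≤ dist x y) :
    packingUpperDensity n P ≤
      ENNReal.ofReal (Real.sin (θ / 2) ^ n * (sphericalCodeMax n θ : ℝ)) := by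
  classical
  obtain ⟨hs1, hs2, _⟩ := sin_half_facts hθ1 hθ2
  set s := Real.sin (θ/2) with hsdef
  have hspos : 0 < s := by linarith
  set M := 1/s with hMdef
  have hM1 : 1 ≤ M := by rw [hMdef, le_div_iff₀ hspos]; linarith
  have hM2 : M ≤ 2 := by rw [hMdef, div_le_iff₀ hspos]; linarith
  set A := sphericalCodeMax n θ with hAdef
  set C := ENNReal.ofReal (s ^ n * (A : ℝ)) with hCdef
  set U := ⋃ x ∈ P, closedBall x 1 with hUdef
  set v := volume (ball (0 : EuclideanSpace ℝ (Fin n)) 1) with hvdef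
  have hv0 : v ≠ 0 := (measure_ball_pos volume _ one_pos).ne'
  have hvt : v ≠ ⊤ := measure_ball_lt_top.ne
  have hfr : Module.finrank ℝ (EuclideanSpace ℝ (Fin n)) = n := finrank_euclideanSpace_fin
  -- main estimate for each R ≥ 1
  have key : ∀ R : ℝ, 1 ≤ R →
      volume (U ∩ closedBall (0 : EuclideanSpace ℝ (Fin n)) R) / volume (closedBall (0 : EuclideanSpace ℝ (Fin n)) R) ≤
        C * ENNReal.ofReal (((R + 1 + M)/R)^n) := by
    intro R hR
    have hRpos : (0:ℝ) < R := by linarith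
    set F := (finite_inter hn P hP (R+1)).toFinset with hF
    have hFP : ∀ x ∈ F, x ∈ P := by
      intro x hx
      rw [hF, Set.Finite.mem_toFinset] at hx
      exact hx.1
    have hFt : ∀ x ∈ F, ‖x‖ ≤ R + 1 := by
      intro x hx
      rw [hF, Set.Finite.mem_toFinset] at hx
      have := hx.2
      rwa [mem_closedBall, dist_zero_right] at this
    -- covering bound
    have hsub : U ∩ closedBall (0 : EuclideanSpace ℝ (Fin n)) R ⊆ ⋃ x ∈ F, closedBall x 1 := by
      rintro p ⟨hpU, hpR⟩
      rw [hUdef] at hpU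
      simp only [Set.mem_iUnion] at hpU ⊢
      obtain ⟨x, hx, hpx⟩ := hpU
      refine ⟨x, ?_, hpx⟩
      rw [hF, Set.Finite.mem_toFinset]
      refine ⟨hx, ?_⟩
      rw [mem_closedBall]
      rw [mem_closedBall] at hpx hpR
      calc dist x 0 ≤ dist x p + dist p 0 := dist_triangle _ _ _
        _ ≤ 1 + R := add_le_add (by rwa [dist_comm] at hpx) hpR
        _ = R + 1 := by ring
    have h2 : volume (U ∩ closedBall (0 : EuclideanSpace ℝ (Fin n)) R) ≤ (F.card : ℝ≥0∞) *
        volume (closedBall (0 : EuclideanSpace ℝ (Fin n)) 1) := by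
      calc volume (U ∩ closedBall (0 : EuclideanSpace ℝ (Fin n)) R) ≤ volume (⋃ x ∈ F, closedBall x 1) :=
            measure_mono hsub
        _ ≤ ∑ x ∈ F, volume (closedBall x 1) := measure_biUnion_finset_le _ _
        _ = (F.card : ℝ≥0∞) * volume (closedBall (0 : EuclideanSpace ℝ (Fin n)) 1) := by
            rw [Finset.sum_congr rfl
              (fun x _ => Measure.addHaar_closedBall_center volume x 1),
              Finset.sum_const, nsmul_eq_mul]
    have h3 := counting hn hθ1 hθ2 P hP F hFP (R+1) hFt
    rw [← hMdef, ← hAdef] at h3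
    -- convert to the ofReal world
    have eM : volume (closedBall (0 : EuclideanSpace ℝ (Fin n)) M) = ENNReal.ofReal (M^n) * v := by
      rw [Measure.addHaar_closedBall volume _ (by linarith : (0:ℝ) ≤ M), hfr, hvdef]
    have eR1M : volume (closedBall (0 : EuclideanSpace ℝ (Fin n)) ((R+1) + M)) =
        ENNReal.ofReal ((R + 1 + M)^n) * v := by
      rw [Measure.addHaar_closedBall volume _ (by linarith : (0:ℝ) ≤ (R+1) + M), hfr, hvdef]
    rw [eM, eR1M, ← mul_assoc, ← mul_assoc, ENNReal.mul_le_mul_iff_left hv0 hvt] at h3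
    -- multiply by ofReal (s^n)
    have h4 : (F.card : ℝ≥0∞) ≤ (A : ℝ≥0∞) * ENNReal.ofReal ((R + 1 + M)^n * s^n) := by
      have hms : M * s = 1 := by rw [hMdef]; field_simp
      have e1 : ENNReal.ofReal (M^n) * ENNReal.ofReal (s^n) = 1 := by
        rw [← ENNReal.ofReal_mul (by positivity), ← mul_pow, hms, one_pow, ENNReal.ofReal_one]
      calc (F.card : ℝ≥0∞) = (F.card : ℝ≥0∞) * (ENNReal.ofReal (M^n) * ENNReal.ofReal (s^n)) := by
            rw [e1, mul_one]
        _ = ((F.card : ℝ≥0∞) * ENNReal.ofReal (M^n)) * ENNReal.ofReal (s^n) := by ring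
        _ ≤ ((A : ℝ≥0∞) * ENNReal.ofReal ((R + 1 + M)^n)) * ENNReal.ofReal (s^n) := by
            exact mul_le_mul_left h3 _
        _ = (A : ℝ≥0∞) * ENNReal.ofReal ((R + 1 + M)^n * s^n) := by
            rw [mul_assoc, ← ENNReal.ofReal_mul (by positivity)]
    -- wrap up the division
    have hden0 : volume (closedBall (0 : EuclideanSpace ℝ (Fin n)) R) ≠ 0 := by
      apply (measure_closedBall_pos volume _ (by linarith : (0:ℝ) < R)).ne'
    have hdent : volume (closedBall (0 : EuclideanSpace ℝ (Fin n)) R) ≠ ⊤ := measure_closedBall_lt_top.ne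
    rw [ENNReal.div_le_iff hden0 hdent]
    calc volume (U ∩ closedBall (0 : EuclideanSpace ℝ (Fin n)) R)
        ≤ (F.card : ℝ≥0∞) * volume (closedBall (0 : EuclideanSpace ℝ (Fin n)) 1) := h2
      _ ≤ ((A : ℝ≥0∞) * ENNReal.ofReal ((R + 1 + M)^n * s^n)) *
            volume (closedBall (0 : EuclideanSpace ℝ (Fin n)) 1) := mul_le_mul_left h4 _
      _ = C * ENNReal.ofReal (((R + 1 + M)/R)^n) * volume (closedBall (0 : EuclideanSpace ℝ (Fin n)) R) := by
          have e1 : volume (closedBall (0 : EuclideanSpace ℝ (Fin n)) 1) = v := by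
            rw [Measure.addHaar_closedBall volume _ (by norm_num : (0:ℝ) ≤ 1), hfr, hvdef,
              one_pow, ENNReal.ofReal_one, one_mul]
          have eR : volume (closedBall (0 : EuclideanSpace ℝ (Fin n)) R) =
              ENNReal.ofReal (R^n) * v := by
            rw [Measure.addHaar_closedBall volume _ (by linarith : (0:ℝ) ≤ R), hfr, hvdef]
          rw [e1, eR, hCdef]
          have hA' : ((A : ℕ) : ℝ≥0∞) = ENNReal.ofReal (A : ℝ) := by
            simp [ENNReal.ofReal_natCast]
          have key2 : ENNReal.ofReal (s ^ n * (A:ℝ)) * ENNReal.ofReal (((R + 1 + M) / R) ^ n) *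
              ENNReal.ofReal (R ^ n) = (A : ℝ≥0∞) * ENNReal.ofReal ((R + 1 + M) ^ n * s ^ n) := by
            rw [hA', ← ENNReal.ofReal_mul (by positivity), ← ENNReal.ofReal_mul (by positivity),
              ← ENNReal.ofReal_mul (by positivity)]
            congr 1
            rw [div_pow]
            field_simp
          rw [← key2]
          ring
  -- pass to the limsup
  have hev : ∀ᶠ R in Filter.atTop, (fun R : ℝ =>
      volume (U ∩ closedBall (0 : EuclideanSpace ℝ (Fin n)) R) / volume (closedBall (0 : EuclideanSpace ℝ (Fin n)) R)) R ≤
      (fun R : ℝ => C * ENNReal.ofReal (((R + 1 + M)/R)^n)) R := by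
    filter_upwards [Filter.eventually_ge_atTop (1:ℝ)] with R hR
    exact key R hR
  have htends : Filter.Tendsto (fun R : ℝ => C * ENNReal.ofReal (((R + 1 + M)/R)^n))
      Filter.atTop (nhds C) := by
    have h0 : Filter.Tendsto (fun R : ℝ => (R + 1 + M)/R) Filter.atTop (nhds 1) := by
      have he : ∀ᶠ R in Filter.atTop, 1 + (1 + M) * R⁻¹ = (R + 1 + M)/R := by
        filter_upwards [Filter.eventually_gt_atTop (0:ℝ)] with R hR
        field_simp
        ring
      have h1 : Filter.Tendsto (fun R : ℝ => 1 + (1 + M) * R⁻¹) Filter.atTop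
          (nhds (1 + (1 + M) * 0)) := by
        exact Filter.Tendsto.const_add _ (Filter.Tendsto.const_mul _ tendsto_inv_atTop_zero)
      rw [show (1 : ℝ) + (1 + M) * 0 = 1 by ring] at h1
      exact Filter.Tendsto.congr' he h1
    have h2 : Filter.Tendsto (fun R : ℝ => ENNReal.ofReal (((R + 1 + M)/R)^n))
        Filter.atTop (nhds (ENNReal.ofReal ((1:ℝ)^n))) :=
      (ENNReal.continuous_ofReal.tendsto _).comp (h0.pow n)
    rw [one_pow, ENNReal.ofReal_one] at h2
    have h3 := ENNReal.Tendsto.const_mul (a := C) h2 (Or.inl one_ne_zero)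
    rwa [mul_one] at h3
  have hlimsup := Filter.limsup_le_limsup hev
  rw [htends.limsup_eq] at hlimsup
  rw [packingUpperDensity]
  exact hlimsup
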